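/- Let $p$ be a prime and let $G$ be a non-abelian split metacyclic $p$-group admitting two decompositions $G = \langle x\rangle \rtimes \langle y\rangle = \langle a\rangle \rtimes \langle b\rangle$ with $\langle x\rangle, \langle a\rangle$ normal cyclic subgroups. Then $\langle x\rangle \cong \langle a\rangle$ (and hence $\langle y\rangle \cong \langle b\rangle$). -/

import Mathlib

open Subgroup
open scoped commutatorElement

section NT

lemma stmt4_geom_split (A a b : ℕ) :
    ∑ t ∈ Finset.range (a * b), A ^ t
      = (∑ t ∈ Finset.range a, A ^ t) * ∑ r ∈ Finset.range b, (A ^ a) ^ r := by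
  induction b with
  | zero => simp
  | succ b ih =>
    rw [Nat.mul_succ, Finset.sum_range_add, ih, Finset.sum_range_succ, Nat.mul_add]
    congr 1
    rw [Finset.sum_mul]
    refine Finset.sum_congr rfl fun i _ => ?_
    rw [pow_add, ← pow_mul, mul_comm]

lemma stmt4_pow_pow_zmod (p : ℕ) [Fact p.Prime] (a : ZMod p) (n : ℕ) : a ^ p ^ n = a := by
  induction n with
  | zero => simp
  | succ n ih => rw [pow_succ, pow_mul, ih, ZMod.pow_card]

lemma stmt4_sum_geom_pow_dvd (p : ℕ) [Fact p.Prime] (A : ℕ) (hA : A ≡ 1 [MOD p]) (e : ℕ) :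
    p ^ e ∣ ∑ t ∈ Finset.range (p ^ e), A ^ t := by
  induction e with
  | zero => simp
  | succ e ih =>
    rw [pow_succ, stmt4_geom_split]
    refine Nat.mul_dvd_mul ih ?_
    have h1 : ((A : ZMod p)) = 1 := by
      have := (ZMod.natCast_eq_natCast_iff _ _ _).mpr hA
      simpa using this
    have : ((∑ r ∈ Finset.range p, ((A:ℕ) ^ p ^ e) ^ r : ℕ) : ZMod p) = 0 := by
      push_cast
      rw [h1]
      simp [ZMod.natCast_self]
    exact (ZMod.natCast_eq_zero_iff _ _).mp this

lemma stmt4_NT (p : ℕ) [Fact p.Prime] (A m n : ℕ) (hA : A ^ p ^ n ≡ 1 [MOD p ^ m]) :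
    p ^ m ∣ ∑ t ∈ Finset.range (p ^ max m n), A ^ t := by
  rcases Nat.eq_zero_or_pos m with rfl | hm
  · simp
  have hA1 : A ≡ 1 [MOD p] := by
    have h1 : A ^ p ^ n ≡ 1 [MOD p] := hA.of_dvd (dvd_pow_self p hm.ne')
    have h2 : (A : ZMod p) ^ p ^ n = (A : ZMod p) := stmt4_pow_pow_zmod p _ n
    have h3 : ((A ^ p ^ n : ℕ) : ZMod p) = ((1:ℕ) : ZMod p) :=
      (ZMod.natCast_eq_natCast_iff _ _ _).mpr h1
    have : ((A : ℕ) : ZMod p) = ((1:ℕ) : ZMod p) := by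
      push_cast at h3 ⊢
      rw [← h2, h3]
    exact (ZMod.natCast_eq_natCast_iff _ _ _).mp this
  set K := max m n with hK
  have hnK : n ≤ K := le_max_right m n
  have hsplit : ∑ t ∈ Finset.range (p ^ K), A ^ t
      = (∑ t ∈ Finset.range (p ^ n), A ^ t)
          * ∑ r ∈ Finset.range (p ^ (K - n)), (A ^ p ^ n) ^ r := by
    rw [← stmt4_geom_split, ← pow_add, Nat.add_sub_cancel' hnK]
  rw [hsplit]
  have h2 : (∑ r ∈ Finset.range (p ^ (K - n)), (A ^ p ^ n) ^ r) ≡ p ^ (K - n) [MOD p ^ m] := by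
    have hc : ((A ^ p ^ n : ℕ) : ZMod (p ^ m)) = ((1 : ℕ) : ZMod (p ^ m)) :=
      (ZMod.natCast_eq_natCast_iff _ _ _).mpr hA
    refine (ZMod.natCast_eq_natCast_iff _ _ _).mp ?_
    push_cast at hc ⊢
    rw [hc]
    simp
  have h1 : p ^ min m n ∣ ∑ t ∈ Finset.range (p ^ n), A ^ t :=
    dvd_trans (pow_dvd_pow p (min_le_right m n)) (stmt4_sum_geom_pow_dvd p A hA1 n)
  obtain ⟨u, hu⟩ := h1
  have hdvd : p ^ m ∣ (∑ t ∈ Finset.range (p ^ n), A ^ t) * p ^ (K - n) := by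
    rw [hu]
    have hexp : min m n + (K - n) = m := by omega
    calc p ^ m = p ^ (min m n) * p ^ (K - n) := by rw [← pow_add, hexp]
    _ ∣ (p ^ min m n * u) * p ^ (K - n) := Nat.mul_dvd_mul (Dvd.intro u rfl) dvd_rfl
  have := (Nat.ModEq.mul_left (∑ t ∈ Finset.range (p ^ n), A ^ t) h2).trans
    ((Nat.modEq_zero_iff_dvd).mpr hdvd)
  exact (Nat.modEq_zero_iff_dvd).mp this

end NT

section GroupLemmas

variable {G : Type*} [Group G]

lemma stmt4_isCyclic_zpowers (x : G) : IsCyclic (zpowers x) := by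
  refine ⟨⟨⟨x, mem_zpowers x⟩, fun g => ?_⟩⟩
  obtain ⟨k, hk⟩ := g.2
  exact ⟨k, Subtype.ext (by simpa using hk)⟩

lemma stmt4_conj_formula (x y : G) (s : ℕ) (hs : y * x * y⁻¹ = x ^ s) (k : ℕ) :
    y ^ k * x * (y ^ k)⁻¹ = x ^ s ^ k := by
  induction k with
  | zero => simp
  | succ k ih =>
    have h : y ^ (k+1) * x * (y ^ (k+1))⁻¹ = y * (y ^ k * x * (y ^ k)⁻¹) * y⁻¹ := by
      group
    rw [h, ih, ← conj_pow, hs, ← pow_mul, pow_succ, Nat.mul_comm]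

lemma stmt4_pow_formula (x y : G) (s : ℕ)
    (hconj : ∀ k : ℕ, y ^ k * x * (y ^ k)⁻¹ = x ^ s ^ k)
    (i j : ℕ) : ∀ k : ℕ, (x ^ i * y ^ j) ^ k
      = x ^ (i * ∑ t ∈ Finset.range k, s ^ (j * t)) * y ^ (j * k) := by
  intro k
  induction k with
  | zero => simp
  | succ k ih =>
    rw [pow_succ, ih]
    have hcom : y ^ (j*k) * x ^ i = x ^ (i * s ^ (j*k)) * y ^ (j*k) := by
      have h1 : y ^ (j*k) * x ^ i * (y ^ (j*k))⁻¹ = x ^ (s ^ (j*k) * i) := by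
        rw [← conj_pow, hconj (j*k), ← pow_mul]
      rw [mul_comm (s ^ (j*k)) i] at h1
      rw [← h1]; group
    calc x ^ (i * ∑ t ∈ Finset.range k, s ^ (j*t)) * y ^ (j*k) * (x ^ i * y ^ j)
        = x ^ (i * ∑ t ∈ Finset.range k, s ^ (j*t)) * (y ^ (j*k) * x ^ i) * y ^ j := by
          simp [mul_assoc]
      _ = x ^ (i * ∑ t ∈ Finset.range k, s ^ (j*t)) * (x ^ (i * s ^ (j*k)) * y ^ (j*k)) * y ^ j := by
          rw [hcom]
      _ = (x ^ (i * ∑ t ∈ Finset.range k, s ^ (j*t)) * x ^ (i * s ^ (j*k))) * (y ^ (j*k) * y ^ j) := by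
          simp [mul_assoc]
      _ = x ^ (i * ∑ t ∈ Finset.range (k+1), s ^ (j*t)) * y ^ (j*(k+1)) := by
          rw [← pow_add, ← pow_add, Finset.sum_range_succ, Nat.mul_add, Nat.mul_succ]

variable [Finite G]

lemma stmt4_exists_nat_pow (x u : G) (hu : u ∈ zpowers x) : ∃ i : ℕ, x ^ i = u := by
  have := (isOfFinOrder_of_finite x).mem_powers_iff_mem_zpowers.mpr hu
  exact (Submonoid.mem_powers_iff u x).mp this

lemma stmt4_decomp (x y : G) (hNx : (zpowers x).Normal) (hx1 : zpowers x ⊔ zpowers y = ⊤)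
    (g : G) : ∃ i j : ℕ, x ^ i * y ^ j = g := by
  have hg : g ∈ (↑(zpowers x ⊔ zpowers y) : Set G) := by rw [hx1]; trivial
  rw [Subgroup.normal_mul] at hg
  obtain ⟨u, hu, v, hv, huv⟩ := Set.mem_mul.mp hg
  obtain ⟨i, hi⟩ := stmt4_exists_nat_pow x u hu
  obtain ⟨j, hj⟩ := stmt4_exists_nat_pow y v hv
  exact ⟨i, j, by rw [hi, hj]; exact huv⟩

lemma stmt4_card_eq (x y : G) (hNx : (zpowers x).Normal) (hx1 : zpowers x ⊔ zpowers y = ⊤)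
    (hx2 : zpowers x ⊓ zpowers y = ⊥) :
    Nat.card G = orderOf x * orderOf y := by
  let φ : (zpowers y) →* G ⧸ zpowers x := (QuotientGroup.mk' (zpowers x)).comp (zpowers y).subtype
  have hbij : Function.Bijective φ := by
    constructor
    · rw [injective_iff_map_eq_one]
      intro h hh
      have h1 : (h : G) ∈ zpowers x := (QuotientGroup.eq_one_iff _).mp hh
      have h2 : (h : G) ∈ zpowers x ⊓ zpowers y := ⟨h1, h.2⟩
      rw [hx2] at h2
      exact Subtype.ext h2
    · intro q
      induction q using QuotientGroup.induction_on with
      | H g =>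
        obtain ⟨i, j, hij⟩ := stmt4_decomp x y hNx hx1 g
        refine ⟨⟨y ^ j, pow_mem (mem_zpowers y) j⟩, ?_⟩
        show QuotientGroup.mk (y ^ j) = QuotientGroup.mk g
        rw [QuotientGroup.eq, ← hij]
        have h3 : (y ^ j)⁻¹ * (x ^ i * y ^ j) = (y ^ j)⁻¹ * x ^ i * y ^ j := by group
        rw [h3]
        exact hNx.conj_mem' _ (pow_mem (mem_zpowers x) i) _
  have hq : Nat.card (G ⧸ zpowers x) = orderOf y := by
    rw [← Nat.card_congr (Equiv.ofBijective φ hbij), Nat.card_zpowers]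
  rw [Subgroup.card_eq_card_quotient_mul_card_subgroup (zpowers x), hq, Nat.card_zpowers,
    Nat.mul_comm]

lemma stmt4_commutator_le_zpowers (x y : G) (hNx : (zpowers x).Normal)
    (hx1 : zpowers x ⊔ zpowers y = ⊤) : commutator G ≤ zpowers x := by
  rw [commutator_def, Subgroup.commutator_le]
  intro g _ h _
  have key : ∀ w : G, ∃ j : ℕ,
      (QuotientGroup.mk w : G ⧸ zpowers x) = (QuotientGroup.mk (y ^ j)) := by
    intro w
    obtain ⟨i, j, hij⟩ := stmt4_decomp x y hNx hx1 w
    refine ⟨j, ?_⟩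
    rw [← hij, QuotientGroup.eq]
    have h3 : (x ^ i * y ^ j)⁻¹ * y ^ j = (y ^ j)⁻¹ * (x ^ i)⁻¹ * y ^ j := by group
    rw [h3]
    exact hNx.conj_mem' _ (inv_mem (pow_mem (mem_zpowers x) i)) _
  obtain ⟨j, hj⟩ := key g
  obtain ⟨l, hl⟩ := key h
  have hcomm : (QuotientGroup.mk ⁅g, h⁆ : G ⧸ zpowers x) = 1 := by
    have h4 : (QuotientGroup.mk ⁅g, h⁆ : G ⧸ zpowers x)
        = ⁅(QuotientGroup.mk g : G ⧸ zpowers x), (QuotientGroup.mk h : G ⧸ zpowers x)⁆ := rfl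
    rw [h4, hj, hl]
    apply commutatorElement_eq_one_iff_mul_comm.mpr
    rw [← QuotientGroup.mk_mul, ← QuotientGroup.mk_mul, pow_mul_comm y j l]
  exact (QuotientGroup.eq_one_iff _).mp hcomm

lemma stmt4_of_eq_one_iff (g : G) : Abelianization.of g = 1 ↔ g ∈ commutator G :=
  QuotientGroup.eq_one_iff g

lemma stmt4_order_of_y (x y : G) (hC : commutator G ≤ zpowers x)
    (hx2 : zpowers x ⊓ zpowers y = ⊥) :
    orderOf (Abelianization.of y) = orderOf y := by
  refine Nat.dvd_antisymm (orderOf_map_dvd _ y) ?_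
  apply orderOf_dvd_of_pow_eq_one
  have h1 : Abelianization.of (y ^ orderOf (Abelianization.of y)) = 1 := by
    rw [map_pow, pow_orderOf_eq_one]
  have h2 : y ^ orderOf (Abelianization.of y) ∈ zpowers x := hC ((stmt4_of_eq_one_iff _).mp h1)
  have h3 : y ^ orderOf (Abelianization.of y) ∈ zpowers x ⊓ zpowers y :=
    ⟨h2, pow_mem (mem_zpowers y) _⟩
  rw [hx2] at h3
  exact h3

lemma stmt4_order_mul_card (x : G) (hC : commutator G ≤ zpowers x) :
    orderOf (Abelianization.of x) * Nat.card (commutator G) = orderOf x := by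
  classical
  let ψ : (zpowers x) →* Abelianization G := (Abelianization.of).comp (zpowers x).subtype
  have hker : ψ.ker = (commutator G).subgroupOf (zpowers x) := by
    ext n
    simp only [MonoidHom.mem_ker, Subgroup.mem_subgroupOf]
    exact stmt4_of_eq_one_iff _
  have hrange : ψ.range = zpowers (Abelianization.of x) := by
    have h : ψ.range = (zpowers x).map Abelianization.of := by
      rw [MonoidHom.range_comp, Subgroup.range_subtype]
    rw [h, MonoidHom.map_zpowers]
  have hcard1 : Nat.card (zpowers x) = Nat.card ((zpowers x) ⧸ ψ.ker) * Nat.card ψ.ker :=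
    Subgroup.card_eq_card_quotient_mul_card_subgroup ψ.ker
  have hq : Nat.card ((zpowers x) ⧸ ψ.ker) = orderOf (Abelianization.of x) := by
    rw [Nat.card_congr (QuotientGroup.quotientKerEquivRange ψ).toEquiv, hrange,
      Nat.card_zpowers]
  have hk : Nat.card ψ.ker = Nat.card (commutator G) := by
    rw [hker]
    exact Nat.card_congr (Subgroup.subgroupOfEquivOfLe hC).toEquiv
  rw [← Nat.card_zpowers x, hcard1, hq, hk]

lemma stmt4_of_surj : Function.Surjective (Abelianization.of : G →* Abelianization G) := by
  intro q
  obtain ⟨g, rfl⟩ := QuotientGroup.mk_surjective q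
  exact ⟨g, rfl⟩

lemma stmt4_exponent_ab_dvd (x y : G) (hNx : (zpowers x).Normal)
    (hx1 : zpowers x ⊔ zpowers y = ⊤) (E : ℕ)
    (h1 : orderOf (Abelianization.of x) ∣ E) (h2 : orderOf (Abelianization.of y) ∣ E) :
    Monoid.exponent (Abelianization G) ∣ E := by
  apply Monoid.exponent_dvd_of_forall_pow_eq_one
  intro q
  obtain ⟨g, rfl⟩ := stmt4_of_surj q
  obtain ⟨i, j, rfl⟩ := stmt4_decomp x y hNx hx1 g
  rw [map_mul, map_pow, map_pow, mul_pow, ← pow_mul, ← pow_mul,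
    mul_comm i E, mul_comm j E, pow_mul, pow_mul,
    orderOf_dvd_iff_pow_eq_one.mp h1, orderOf_dvd_iff_pow_eq_one.mp h2, one_pow, one_pow, one_mul]

/-- The master lemma: numerical invariants attached to one split metacyclic decomposition. -/
lemma stmt4_master (p : ℕ) [Fact p.Prime] (hp : IsPGroup p G)
    (x y : G) (hNx : (zpowers x).Normal)
    (hx1 : zpowers x ⊔ zpowers y = ⊤) (hx2 : zpowers x ⊓ zpowers y = ⊥) :
    ∃ m n d : ℕ,
      orderOf x = p ^ m ∧
      Nat.card G = p ^ (m + n) ∧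
      Monoid.exponent G = p ^ max m n ∧
      p ^ d * Nat.card (commutator G) = p ^ m ∧
      Monoid.exponent (Abelianization G) = p ^ max d n := by
  have hp2 : p.Prime := Fact.out
  -- orders are p-powers
  have hordp : ∀ g : G, ∃ m, orderOf g = p ^ m := by
    intro g
    obtain ⟨k, hk⟩ := hp g
    obtain ⟨m, _, hm⟩ := (Nat.dvd_prime_pow hp2).mp (orderOf_dvd_of_pow_eq_one hk)
    exact ⟨m, hm⟩
  obtain ⟨m, hm⟩ := hordp x
  obtain ⟨n, hn⟩ := hordp y
  have hC : commutator G ≤ zpowers x := stmt4_commutator_le_zpowers x y hNx hx1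
  -- the d
  have hdvd : orderOf (Abelianization.of x) ∣ p ^ m := by
    rw [← hm]; exact orderOf_map_dvd _ x
  obtain ⟨d, _, hd⟩ := (Nat.dvd_prime_pow hp2).mp hdvd
  refine ⟨m, n, d, hm, ?_, ?_, ?_, ?_⟩
  · rw [stmt4_card_eq x y hNx hx1 hx2, hm, hn, pow_add]
  · -- exponent of G
    obtain ⟨s, hs⟩ := stmt4_exists_nat_pow x (y * x * y⁻¹) (hNx.conj_mem x (mem_zpowers x) y)
    have hconj : ∀ k : ℕ, y ^ k * x * (y ^ k)⁻¹ = x ^ s ^ k :=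
      stmt4_conj_formula x y s hs.symm
    have hmod : s ^ p ^ n ≡ 1 [MOD p ^ m] := by
      have h0 := hconj (p ^ n)
      have hy1 : y ^ p ^ n = 1 := by rw [← hn]; exact pow_orderOf_eq_one y
      rw [hy1] at h0
      simp only [one_mul, inv_one, mul_one] at h0
      have : x ^ s ^ p ^ n = x ^ 1 := by rw [← h0, pow_one]
      have := pow_eq_pow_iff_modEq.mp this
      rwa [hm] at this
    have hdvd1 : Monoid.exponent G ∣ p ^ max m n := by
      apply Monoid.exponent_dvd_of_forall_pow_eq_one
      intro g
      obtain ⟨i, j, rfl⟩ := stmt4_decomp x y hNx hx1 g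
      rw [stmt4_pow_formula x y s hconj i j (p ^ max m n)]
      have hypart : y ^ (j * p ^ max m n) = 1 := by
        apply orderOf_dvd_iff_pow_eq_one.mp
        rw [hn]
        exact dvd_mul_of_dvd_right (pow_dvd_pow p (le_max_right m n)) j
      have hxpart : x ^ (i * ∑ t ∈ Finset.range (p ^ max m n), s ^ (j * t)) = 1 := by
        apply orderOf_dvd_iff_pow_eq_one.mp
        rw [hm]
        have hsum : ∑ t ∈ Finset.range (p ^ max m n), s ^ (j * t)
            = ∑ t ∈ Finset.range (p ^ max m n), (s ^ j) ^ t := by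
          refine Finset.sum_congr rfl fun t _ => ?_
          rw [pow_mul]
        rw [hsum]
        have hA : (s ^ j) ^ p ^ n ≡ 1 [MOD p ^ m] := by
          have : (s ^ j) ^ p ^ n = (s ^ p ^ n) ^ j := by
            rw [← pow_mul, ← pow_mul, Nat.mul_comm]
          rw [this]
          simpa using hmod.pow j
        exact dvd_mul_of_dvd_right (stmt4_NT p (s ^ j) m n hA) i
      rw [hxpart, hypart, one_mul]
    have hdvd2 : p ^ max m n ∣ Monoid.exponent G := by
      rcases max_cases m n with ⟨h, _⟩ | ⟨h, _⟩
      · rw [h, ← hm]; exact Monoid.order_dvd_exponent x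
      · rw [h, ← hn]; exact Monoid.order_dvd_exponent y
    exact Nat.dvd_antisymm hdvd1 hdvd2
  · rw [← hd, stmt4_order_mul_card x hC, hm]
  · -- exponent of abelianization
    have hny : orderOf (Abelianization.of y) = p ^ n := by
      rw [stmt4_order_of_y x y hC hx2, hn]
    have hdvd1 : Monoid.exponent (Abelianization G) ∣ p ^ max d n := by
      apply stmt4_exponent_ab_dvd x y hNx hx1
      · rw [hd]; exact pow_dvd_pow p (le_max_left d n)
      · rw [hny]; exact pow_dvd_pow p (le_max_right d n)
    have hdvd2 : p ^ max d n ∣ Monoid.exponent (Abelianization G) := by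
      rcases max_cases d n with ⟨h, _⟩ | ⟨h, _⟩
      · rw [h, ← hd]; exact Monoid.order_dvd_exponent (Abelianization.of x)
      · rw [h, ← hny]; exact Monoid.order_dvd_exponent (Abelianization.of y)
    exact Nat.dvd_antisymm hdvd1 hdvd2

end GroupLemmas

/-- Let `p` be a prime and `G` a non-abelian split metacyclic `p`-group with two
decompositions `G = ⟨x⟩ ⋊ ⟨y⟩ = ⟨a⟩ ⋊ ⟨b⟩` (with `⟨x⟩, ⟨a⟩` normal).
Then `⟨x⟩ ≅ ⟨a⟩`. -/
theorem stmt_4 (p : ℕ) [Fact p.Prime] (G : Type*) [Group G] [Finite G]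
    (hp : IsPGroup p G)
    (hna : ¬ ∀ g h : G, g * h = h * g)
    (x y a b : G)
    (hNx : (Subgroup.zpowers x).Normal)
    (hx1 : Subgroup.zpowers x ⊔ Subgroup.zpowers y = ⊤)
    (hx2 : Subgroup.zpowers x ⊓ Subgroup.zpowers y = ⊥)
    (hNa : (Subgroup.zpowers a).Normal)
    (ha1 : Subgroup.zpowers a ⊔ Subgroup.zpowers b = ⊤)
    (ha2 : Subgroup.zpowers a ⊓ Subgroup.zpowers b = ⊥) :
    Nonempty ((Subgroup.zpowers x) ≃* (Subgroup.zpowers a)) := by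
  have hp2 : p.Prime := Fact.out
  obtain ⟨m, n, d, hxm, hcard, hexp, heq, hab⟩ := stmt4_master p hp x y hNx hx1 hx2
  obtain ⟨m', n', d', ham, hcard', hexp', heq', hab'⟩ := stmt4_master p hp a b hNa ha1 ha2
  -- commutator subgroup is a nontrivial p-group
  obtain ⟨c, hc⟩ : ∃ c, Nat.card (commutator G) = p ^ c :=
    IsPGroup.iff_card.mp (hp.to_subgroup (commutator G))
  have hc1 : 1 ≤ c := by
    by_contra hcon
    have hc0 : c = 0 := by omega
    rw [hc0, pow_zero] at hc
    have hbot : commutator G = ⊥ := Subgroup.card_eq_one.mp hc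
    apply hna
    intro g h
    have hgh : ⁅g, h⁆ ∈ commutator G := by
      rw [_root_.commutator_def]
      exact Subgroup.commutator_mem_commutator (Subgroup.mem_top g) (Subgroup.mem_top h)
    rw [hbot, Subgroup.mem_bot] at hgh
    exact commutatorElement_eq_one_iff_mul_comm.mp hgh
  -- transfer everything to arithmetic
  have hinj : Function.Injective (p ^ ·) := Nat.pow_right_injective hp2.two_le
  rw [hc, ← pow_add] at heq heq'
  have e1 : d + c = m := hinj heq
  have e2 : d' + c = m' := hinj heq'
  have e3 : m + n = m' + n' := hinj (hcard.symm.trans hcard')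
  have e4 : max m n = max m' n' := hinj (hexp.symm.trans hexp')
  have e5 : max d n = max d' n' := hinj (hab.symm.trans hab')
  have hmm : m = m' := by omega
  have hord : orderOf x = orderOf a := by rw [hxm, ham, hmm]
  have hcyc1 : IsCyclic (Subgroup.zpowers x) := stmt4_isCyclic_zpowers x
  have hcyc2 : IsCyclic (Subgroup.zpowers a) := stmt4_isCyclic_zpowers a
  exact ⟨mulEquivOfCyclicCardEq (by rw [Nat.card_zpowers, Nat.card_zpowers, hord])⟩
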